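/- In the model manifold X = (ℂ^×)^l × ℂ^k × ℂ^l × ℂ^k with T = (ℂ^×)^{l+k} acting by (s,t)·(θ,v,β,w) = (sθ, tv, β, t^{-1}w): the stabilizer of a point (θ, v, β, w) is trivial if and only if for each j = 1,…,k, at least one of vⱼ, wʲ is nonzero; and the open set {x : vⱼ(x) ≠ 0 for all j} meets each fiber of π(θ,v,β,w) = (β, v₁w¹,…,v_kw^k) in exactly one T-orbit. -/
import Mathlib


/-- Points of the ambient space of the model manifold `X = (ℂˣ)ˡ × ℂᵏ × ℂˡ × ℂᵏ`. -/
abbrev ModelSpace (l k : ℕ) :=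
  (Fin l → ℂ) × (Fin k → ℂ) × (Fin l → ℂ) × (Fin k → ℂ)

/-- The model manifold `X`: points with all `θᵢ ≠ 0`. -/
def modelSet (l k : ℕ) : Set (ModelSpace l k) := {x | ∀ i, x.1 i ≠ 0}

/-- The action of `T = (ℂˣ)ˡ × (ℂˣ)ᵏ`: `(s,t)·(θ,v,β,w) = (sθ, tv, β, t⁻¹w)`. -/
def modelAct (l k : ℕ) (g : (Fin l → ℂˣ) × (Fin k → ℂˣ)) (x : ModelSpace l k) :
    ModelSpace l k :=
  (fun i => (g.1 i : ℂ) * x.1 i, fun j => (g.2 j : ℂ) * x.2.1 j, x.2.2.1,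
    fun j => ((g.2 j)⁻¹ : ℂˣ) * x.2.2.2 j)

/-- The quotient map `π(θ,v,β,w) = (β, v₁w¹,…,v_k wᵏ)`. -/
def modelQuot (l k : ℕ) (x : ModelSpace l k) : (Fin l → ℂ) × (Fin k → ℂ) :=
  (x.2.2.1, fun j => x.2.1 j * x.2.2.2 j)

/-- in the model manifold, (1) the stabilizer of a point `x` is trivial
iff for each `j` at least one of `vⱼ(x), wʲ(x)` is nonzero; and (2) the open set
`{x : vⱼ(x) ≠ 0 for all j}` meets each fiber of `π` in exactly one `T`-orbit. -/
theorem stmt16 (l k : ℕ) :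
    (∀ x ∈ modelSet l k,
      ((∀ g : (Fin l → ℂˣ) × (Fin k → ℂˣ), modelAct l k g x = x → g = 1)
        ↔ ∀ j, x.2.1 j ≠ 0 ∨ x.2.2.2 j ≠ 0)) ∧
    (∀ y : (Fin l → ℂ) × (Fin k → ℂ),
      ∃ x ∈ modelSet l k, (∀ j, x.2.1 j ≠ 0) ∧ modelQuot l k x = y ∧
        ∀ x' ∈ modelSet l k, (∀ j, x'.2.1 j ≠ 0) → modelQuot l k x' = y →
          ∃ g : (Fin l → ℂˣ) × (Fin k → ℂˣ), modelAct l k g x' = x) := by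
  constructor
  · intro x hx
    constructor
    · intro h j
      by_contra hc
      push_neg at hc
      obtain ⟨hv, hw⟩ := hc
      set u : ℂˣ := Units.mk0 2 two_ne_zero with hu
      have heq := h (1, Function.update 1 j u) ?_
      · have h2 := congrFun (congrArg Prod.snd heq) j
        simp only [Function.update_self, Pi.one_apply] at h2
        have : (2 : ℂ) = 1 := by
          have := congrArg Units.val h2
          simp only [hu, Units.val_mk0, Units.val_one] at this; exact this
        norm_num at this
      · simp only [modelAct]
        refine Prod.ext ?_ (Prod.ext ?_ (Prod.ext rfl ?_))
        · funext i; simp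
        · funext j'
          by_cases hj : j' = j
          · subst hj; simp [hv]
          · simp [Function.update_of_ne hj]
        · funext j'
          by_cases hj : j' = j
          · subst hj; simp [hw]
          · simp [Function.update_of_ne hj]
    · intro h g hg
      have h1 := congrArg Prod.fst hg
      have h2 := congrArg (fun z : ModelSpace l k => z.2.1) hg
      have h4 := congrArg (fun z : ModelSpace l k => z.2.2.2) hg
      simp only [modelAct] at h1 h2 h4
      have hs : g.1 = 1 := by
        funext i
        have hi := congrFun h1 i
        have : (g.1 i : ℂ) = 1 :=
          mul_right_cancel₀ (hx i) (by rw [one_mul]; exact hi)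
        exact Units.ext this
      have ht : g.2 = 1 := by
        funext j
        rcases h j with hv | hw
        · have hj := congrFun h2 j
          have : (g.2 j : ℂ) = 1 :=
            mul_right_cancel₀ hv (by rw [one_mul]; exact hj)
          exact Units.ext this
        · have hj := congrFun h4 j
          have h' : ((g.2 j)⁻¹ : ℂˣ) = (1 : ℂ) :=
            mul_right_cancel₀ hw (by rw [one_mul]; exact hj)
          exact inv_eq_one.mp (Units.ext h')
      exact Prod.ext hs ht
  · intro y
    refine ⟨(fun _ => 1, fun _ => 1, y.1, y.2), ?_, ?_, ?_, ?_⟩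
    · intro i; exact one_ne_zero
    · intro j; exact one_ne_zero
    · simp [modelQuot]
    · intro x' hx' hv' hq
      refine ⟨(fun i => (Units.mk0 _ (hx' i))⁻¹, fun j => (Units.mk0 _ (hv' j))⁻¹), ?_⟩
      simp only [modelQuot, Prod.ext_iff] at hq
      obtain ⟨hb, hc⟩ := hq
      simp only [modelAct]
      refine Prod.ext ?_ (Prod.ext ?_ (Prod.ext hb ?_))
      · funext i; simp [Units.mk0, inv_mul_cancel₀ (hx' i)]
      · funext j; simp [Units.mk0, inv_mul_cancel₀ (hv' j)]
      · funext j
        have := congrFun hc j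
        simp only [Units.mk0, inv_inv]
        exact this
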